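/- The measure with density 1/(x+y-xy)^2 on (0,1)×(0,1) is invariant under the natural extension of the Farey map F̄(x,y) = (x/(1-x), y/(1+y)) for x ∈ [0,1/2) and F̄(x,y) = ((1-x)/x, 1/(1+y)) for x ∈ [1/2,1). -/

import Mathlib

open MeasureTheory Set

/-- The natural extension of the Farey map. -/
noncomputable def fareyNatExt (p : ℝ × ℝ) : ℝ × ℝ :=
  if p.1 < 1/2 then (p.1 / (1 - p.1), p.2 / (1 + p.2))
  else ((1 - p.1) / p.1, 1 / (1 + p.2))

/-- The measure with density 1/(x+y-xy)² on (0,1)×(0,1). -/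
noncomputable def fareyMeasure : Measure (ℝ × ℝ) :=
  ((volume : Measure (ℝ × ℝ)).restrict (Set.Ioo 0 1 ×ˢ Set.Ioo 0 1)).withDensity
    (fun p => ENNReal.ofReal (1 / (p.1 + p.2 - p.1 * p.2)^2))

/-! ### Auxiliary definitions -/

noncomputable def D2 (a b : ℝ) : (ℝ × ℝ) →L[ℝ] (ℝ × ℝ) :=
  (a • (1 : ℝ →L[ℝ] ℝ)).prodMap (b • (1 : ℝ →L[ℝ] ℝ))

lemma D2_det (a b : ℝ) : (D2 a b).det = a * b := by
  have h : ((D2 a b) : (ℝ × ℝ) →ₗ[ℝ] (ℝ × ℝ)) =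
      ((a • (1 : ℝ →ₗ[ℝ] ℝ)).prodMap (b • (1 : ℝ →ₗ[ℝ] ℝ))) := by
    ext p <;> simp [D2]
  rw [ContinuousLinearMap.det, h]
  rw [← LinearMap.det_toMatrix ((Module.Basis.singleton Unit ℝ).prod (Module.Basis.singleton Unit ℝ)),
    LinearMap.toMatrix_prodMap, Matrix.det_fromBlocks_zero₂₁,
    LinearMap.det_toMatrix, LinearMap.det_toMatrix, LinearMap.det_smul,
    LinearMap.det_smul]
  simp

lemma smulRight_one (a : ℝ) :
    ContinuousLinearMap.toSpanSingleton ℝ a = a • (1 : ℝ →L[ℝ] ℝ) := by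
  ext x; simp [mul_comm]

noncomputable def gLf (p : ℝ × ℝ) : ℝ × ℝ :=
  Prod.map (fun x : ℝ => x / (1 - x)) (fun y : ℝ => y / (1 + y)) p
noncomputable def gRf (p : ℝ × ℝ) : ℝ × ℝ :=
  Prod.map (fun x : ℝ => (1 - x) / x) (fun y : ℝ => 1 / (1 + y)) p

noncomputable def DLm (p : ℝ × ℝ) : (ℝ × ℝ) →L[ℝ] (ℝ × ℝ) :=
  D2 (1 / (1 - p.1)^2) (1 / (1 + p.2)^2)
noncomputable def DRm (p : ℝ × ℝ) : (ℝ × ℝ) →L[ℝ] (ℝ × ℝ) :=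
  D2 (-(1 / p.1^2)) (-(1 / (1 + p.2)^2))

lemma hasFDerivAt_gL (p : ℝ × ℝ) (h1 : p.1 ≠ 1) (h2 : p.2 ≠ -1) :
    HasFDerivAt gLf (DLm p) p := by
  have hx : HasDerivAt (fun t : ℝ => t / (1 - t)) (1 / (1 - p.1)^2) p.1 := by
    have h : HasDerivAt (fun t : ℝ => t / (1 - t))
        ((1 * (1 - p.1) - p.1 * (0 - 1)) / (1 - p.1)^2) p.1 :=
      (hasDerivAt_id p.1).div ((hasDerivAt_const p.1 1).sub (hasDerivAt_id p.1))
        (by intro h; apply h1; linarith)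
    convert h using 1; ring
  have hy : HasDerivAt (fun t : ℝ => t / (1 + t)) (1 / (1 + p.2)^2) p.2 := by
    have h : HasDerivAt (fun t : ℝ => t / (1 + t))
        ((1 * (1 + p.2) - p.2 * (0 + 1)) / (1 + p.2)^2) p.2 :=
      (hasDerivAt_id p.2).div ((hasDerivAt_const p.2 1).add (hasDerivAt_id p.2))
        (by intro h; apply h2; linarith)
    convert h using 1; ring
  have := (hx.hasFDerivAt).prodMap p (hy.hasFDerivAt)
  rwa [smulRight_one, smulRight_one] at this

lemma hasFDerivAt_gR (p : ℝ × ℝ) (h1 : p.1 ≠ 0) (h2 : p.2 ≠ -1) :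
    HasFDerivAt gRf (DRm p) p := by
  have hx : HasDerivAt (fun t : ℝ => (1 - t) / t) (-(1 / p.1^2)) p.1 := by
    have h : HasDerivAt (fun t : ℝ => (1 - t) / t)
        (((0 - 1) * p.1 - (1 - p.1) * 1) / p.1^2) p.1 :=
      ((hasDerivAt_const p.1 1).sub (hasDerivAt_id p.1)).div (hasDerivAt_id p.1) h1
    convert h using 1; field_simp; ring
  have hy : HasDerivAt (fun t : ℝ => 1 / (1 + t)) (-(1 / (1 + p.2)^2)) p.2 := by
    have h : HasDerivAt (fun t : ℝ => 1 / (1 + t))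
        ((0 * (1 + p.2) - 1 * (0 + 1)) / (1 + p.2)^2) p.2 :=
      (hasDerivAt_const p.2 1).div ((hasDerivAt_const p.2 1).add (hasDerivAt_id p.2))
        (by intro h; apply h2; linarith)
    convert h using 1; field_simp; ring
  have := (hx.hasFDerivAt).prodMap p (hy.hasFDerivAt)
  rwa [smulRight_one, smulRight_one] at this

noncomputable def fDen : ℝ × ℝ → ENNReal :=
  fun p => ENNReal.ofReal (1 / (p.1 + p.2 - p.1 * p.2)^2)

lemma keyL (x y : ℝ) (hx0 : 0 < x) (hx1 : x < 1/2) (hy0 : 0 < y) (hy1 : y < 1) :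
    ENNReal.ofReal (1 / (1 - x)^2 * (1 / (1 + y)^2)) * fDen (gLf (x, y)) = fDen (x, y) := by
  have h1x : (0:ℝ) < 1 - x := by linarith
  have h1y : (0:ℝ) < 1 + y := by linarith
  have hxy : (0:ℝ) < x + y - x * y := by nlinarith
  rw [fDen, fDen, ← ENNReal.ofReal_mul (by positivity)]
  congr 1
  simp only [gLf, Prod.map_apply]
  have hd : x / (1 - x) + y / (1 + y) - x / (1 - x) * (y / (1 + y))
      = (x + y - x * y) / ((1 - x) * (1 + y)) := by field_simp; ring
  rw [hd]
  field_simp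

lemma keyR (x y : ℝ) (hx0 : 1/2 < x) (hx1 : x < 1) (hy0 : 0 < y) (hy1 : y < 1) :
    ENNReal.ofReal (1 / x^2 * (1 / (1 + y)^2)) * fDen (gRf (x, y)) = fDen (x, y) := by
  have hx : (0:ℝ) < x := by linarith
  have h1y : (0:ℝ) < 1 + y := by linarith
  have hxy : (0:ℝ) < x + y - x * y := by nlinarith
  rw [fDen, fDen, ← ENNReal.ofReal_mul (by positivity)]
  congr 1
  simp only [gRf, Prod.map_apply]
  have hd : (1 - x) / x + 1 / (1 + y) - (1 - x) / x * (1 / (1 + y))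
      = (x + y - x * y) / (x * (1 + y)) := by field_simp; ring
  rw [hd]
  field_simp

lemma image_gL : gLf '' (Ioo 0 (1/2) ×ˢ Ioo 0 1) = Ioo 0 1 ×ˢ Ioo (0:ℝ) (1/2) := by
  ext q
  constructor
  · rintro ⟨⟨x, y⟩, ⟨⟨hx0, hx1⟩, hy0, hy1⟩, rfl⟩
    simp only [mem_prod, mem_Ioo] at *
    have h1x : (0:ℝ) < 1 - x := by linarith
    have h1y : (0:ℝ) < 1 + y := by linarith
    exact ⟨⟨div_pos hx0 h1x, (div_lt_one h1x).2 (by linarith)⟩,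
      div_pos hy0 h1y, (div_lt_iff₀ h1y).2 (by linarith)⟩
  · obtain ⟨u, v⟩ := q
    rintro ⟨⟨hu0, hu1⟩, hv0, hv1⟩
    have h1u : (0:ℝ) < 1 + u := by linarith
    have h1v : (0:ℝ) < 1 - v := by linarith
    refine ⟨(u / (1 + u), v / (1 - v)),
      ⟨⟨div_pos hu0 h1u, (div_lt_iff₀ h1u).2 (by linarith)⟩,
       div_pos hv0 h1v, (div_lt_one h1v).2 (by linarith)⟩, ?_⟩
    simp only [gLf, Prod.map_apply, Prod.mk.injEq]
    constructor
    · rw [div_eq_iff (by rw [show (1:ℝ) - u / (1 + u) = 1 / (1 + u) by field_simp; ring]; positivity)]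
      field_simp
      ring
    · rw [div_eq_iff (by rw [show (1:ℝ) + v / (1 - v) = 1 / (1 - v) by field_simp; ring]; positivity)]
      field_simp
      ring

lemma image_gR : gRf '' (Ioo (1/2) 1 ×ˢ Ioo 0 1) = Ioo 0 1 ×ˢ Ioo (1/2 : ℝ) 1 := by
  ext q
  constructor
  · rintro ⟨⟨x, y⟩, ⟨⟨hx0, hx1⟩, hy0, hy1⟩, rfl⟩
    simp only [mem_prod, mem_Ioo] at *
    have hx : (0:ℝ) < x := by linarith
    have h1y : (0:ℝ) < 1 + y := by linarith
    exact ⟨⟨div_pos (by linarith) hx, (div_lt_one hx).2 (by linarith)⟩,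
      (lt_div_iff₀ h1y).2 (by linarith), (div_lt_one h1y).2 (by linarith)⟩
  · obtain ⟨u, v⟩ := q
    rintro ⟨⟨hu0, hu1⟩, hv0, hv1⟩
    have h1u : (0:ℝ) < 1 + u := by linarith
    have hv : (0:ℝ) < v := by linarith
    refine ⟨(1 / (1 + u), (1 - v) / v),
      ⟨⟨(lt_div_iff₀ h1u).2 (by linarith), (div_lt_one h1u).2 (by linarith)⟩,
       div_pos (by linarith) hv, (div_lt_one hv).2 (by linarith)⟩, ?_⟩
    simp only [gRf, Prod.map_apply, Prod.mk.injEq]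
    constructor
    · rw [div_eq_iff (by positivity)]
      field_simp
      ring
    · rw [div_eq_iff (by rw [show (1:ℝ) + (1 - v) / v = 1 / v by field_simp; ring]; positivity)]
      field_simp
      ring

lemma injOn_gL : InjOn gLf (Ioo 0 (1/2) ×ˢ Ioo 0 1) := by
  rintro ⟨x, y⟩ ⟨⟨hx0, hx1⟩, hy0, hy1⟩ ⟨x', y'⟩ ⟨⟨hx0', hx1'⟩, hy0', hy1'⟩ h
  simp only [gLf, Prod.map_apply, Prod.mk.injEq] at h ⊢
  obtain ⟨h1, h2⟩ := h
  simp only at *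
  have e1 : (1:ℝ) - x ≠ 0 := by intro h; linarith
  have e2 : (1:ℝ) - x' ≠ 0 := by intro h; linarith
  have e3 : (1:ℝ) + y ≠ 0 := by intro h; linarith
  have e4 : (1:ℝ) + y' ≠ 0 := by intro h; linarith
  field_simp at h1 h2
  constructor <;> nlinarith [h1, h2]

lemma injOn_gR : InjOn gRf (Ioo (1/2) 1 ×ˢ Ioo 0 1) := by
  rintro ⟨x, y⟩ ⟨⟨hx0, hx1⟩, hy0, hy1⟩ ⟨x', y'⟩ ⟨⟨hx0', hx1'⟩, hy0', hy1'⟩ h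
  simp only [gRf, Prod.map_apply, Prod.mk.injEq] at h ⊢
  obtain ⟨h1, h2⟩ := h
  simp only at *
  have e1 : x ≠ 0 := by intro h; rw [h] at hx0; linarith
  have e2 : x' ≠ 0 := by intro h; rw [h] at hx0'; linarith
  have e3 : (1:ℝ) + y ≠ 0 := by intro h; linarith
  have e4 : (1:ℝ) + y' ≠ 0 := by intro h; linarith
  field_simp at h1 h2
  constructor <;> nlinarith [h1, h2]

lemma measurable_gL : Measurable gLf := by unfold gLf; fun_prop

lemma measurable_gR : Measurable gRf := by unfold gRf; fun_prop

lemma measurable_fDen : Measurable fDen := by unfold fDen; fun_prop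

lemma measurable_farey : Measurable fareyNatExt := by
  have h : fareyNatExt = fun p : ℝ × ℝ => if p.1 < 1/2 then gLf p else gRf p := rfl
  rw [h]
  exact Measurable.ite (measurableSet_lt measurable_fst measurable_const)
    measurable_gL measurable_gR

theorem fareyNatExt_invariant :
    ∀ A : Set (ℝ × ℝ), MeasurableSet A →
      fareyMeasure (fareyNatExt ⁻¹' A) = fareyMeasure A := by
  intro A hA
  have hSL : MeasurableSet (Ioo (0:ℝ) (1/2) ×ˢ Ioo (0:ℝ) 1) :=
    measurableSet_Ioo.prod measurableSet_Ioo
  have hSR : MeasurableSet (Ioo (1/2:ℝ) 1 ×ˢ Ioo (0:ℝ) 1) :=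
    measurableSet_Ioo.prod measurableSet_Ioo
  have hTL : MeasurableSet (Ioo (0:ℝ) 1 ×ˢ Ioo (0:ℝ) (1/2)) :=
    measurableSet_Ioo.prod measurableSet_Ioo
  have hTR : MeasurableSet (Ioo (0:ℝ) 1 ×ˢ Ioo (1/2:ℝ) 1) :=
    measurableSet_Ioo.prod measurableSet_Ioo
  have hFA : MeasurableSet (fareyNatExt ⁻¹' A) := measurable_farey hA
  have hmeq : fareyMeasure =
      ((volume : Measure (ℝ × ℝ)).restrict (Ioo 0 1 ×ˢ Ioo 0 1)).withDensity fDen := rfl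
  rw [hmeq, withDensity_apply _ hFA, withDensity_apply _ hA,
    Measure.restrict_restrict hFA, Measure.restrict_restrict hA]
  -- the vertical and horizontal half-lines are null
  have hl1 : (volume : Measure (ℝ × ℝ)) {p : ℝ × ℝ | p.1 = 1/2} = 0 := by
    have h : {p : ℝ × ℝ | p.1 = 1/2} = ({1/2} : Set ℝ) ×ˢ (univ : Set ℝ) := by
      ext ⟨x, y⟩; simp [Set.mem_prod, eq_comm]
    rw [h, Measure.volume_eq_prod, Measure.prod_prod]
    simp
  have hl2 : (volume : Measure (ℝ × ℝ)) {p : ℝ × ℝ | p.2 = 1/2} = 0 := by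
    have h : {p : ℝ × ℝ | p.2 = 1/2} = (univ : Set ℝ) ×ˢ ({1/2} : Set ℝ) := by
      ext ⟨x, y⟩; simp [Set.mem_prod, eq_comm]
    rw [h, Measure.volume_eq_prod, Measure.prod_prod]
    simp
  -- split the domain into the two halves
  have hsplit : ((fareyNatExt ⁻¹' A ∩ (Ioo 0 1 ×ˢ Ioo 0 1) : Set (ℝ × ℝ))) =ᵐ[volume]
      (((fareyNatExt ⁻¹' A ∩ (Ioo 0 (1/2) ×ˢ Ioo 0 1)) ∪
       (fareyNatExt ⁻¹' A ∩ (Ioo (1/2) 1 ×ˢ Ioo 0 1)) : Set (ℝ × ℝ))) := by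
    rw [← Set.inter_union_distrib_left]
    refine (ae_eq_set.2 ⟨?_, ?_⟩)
    · apply measure_mono_null _ hl1
      rintro ⟨x, y⟩ ⟨⟨hAm, ⟨hx0, hx1⟩, hy0, hy1⟩, hnot⟩
      show x = 1/2
      by_contra hne
      rcases lt_trichotomy x (1/2) with h | h | h
      · exact hnot ⟨hAm, Or.inl ⟨⟨hx0, h⟩, hy0, hy1⟩⟩
      · exact hne h
      · exact hnot ⟨hAm, Or.inr ⟨⟨h, hx1⟩, hy0, hy1⟩⟩
    · rw [Set.diff_eq_empty.2]
      · exact measure_empty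
      · rintro ⟨x, y⟩ ⟨hAm, hu⟩
        rcases hu with ⟨⟨hx0, hx1⟩, hy0, hy1⟩ | ⟨⟨hx0, hx1⟩, hy0, hy1⟩ <;>
          exact ⟨hAm, ⟨by linarith, by linarith⟩, hy0, hy1⟩
  rw [setLIntegral_congr hsplit]
  have hdisjLR : Disjoint (fareyNatExt ⁻¹' A ∩ (Ioo 0 (1/2) ×ˢ Ioo 0 1))
      (fareyNatExt ⁻¹' A ∩ (Ioo (1/2) 1 ×ˢ Ioo 0 1)) := by
    refine Disjoint.mono inter_subset_right inter_subset_right ?_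
    rw [Set.disjoint_left]
    rintro ⟨x, y⟩ ⟨⟨_, h1⟩, _⟩ ⟨⟨h2, _⟩, _⟩
    simp only at h1 h2
    linarith
  rw [lintegral_union (hFA.inter hSR) hdisjLR]
  -- on each half, replace fareyNatExt by gLf/gRf
  have hLset : fareyNatExt ⁻¹' A ∩ (Ioo 0 (1/2) ×ˢ Ioo 0 1)
      = gLf ⁻¹' A ∩ (Ioo 0 (1/2) ×ˢ Ioo 0 1) := by
    ext p
    simp only [mem_inter_iff, mem_preimage]
    refine and_congr_left fun hp => ?_
    have h : fareyNatExt p = gLf p := by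
      simp only [fareyNatExt, gLf, Prod.map_apply]
      rw [if_pos hp.1.2]
      rfl
    rw [h]
  have hRset : fareyNatExt ⁻¹' A ∩ (Ioo (1/2) 1 ×ˢ Ioo 0 1)
      = gRf ⁻¹' A ∩ (Ioo (1/2) 1 ×ˢ Ioo 0 1) := by
    ext p
    simp only [mem_inter_iff, mem_preimage]
    refine and_congr_left fun hp => ?_
    have h : fareyNatExt p = gRf p := by
      simp only [fareyNatExt, gRf, Prod.map_apply]
      rw [if_neg (not_lt.2 (le_of_lt hp.1.1))]
      rfl
    rw [h]
  rw [hLset, hRset]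
  -- change of variables on the left half
  have hderL : ∀ p ∈ Ioo (0:ℝ) (1/2) ×ˢ Ioo (0:ℝ) 1,
      HasFDerivWithinAt gLf (DLm p) (Ioo (0:ℝ) (1/2) ×ˢ Ioo (0:ℝ) 1) p := by
    rintro ⟨x, y⟩ ⟨⟨hx0, hx1⟩, hy0, hy1⟩
    exact (hasFDerivAt_gL (x, y) (by simp only; intro h; linarith)
      (by simp only; intro h; linarith)).hasFDerivWithinAt
  have hcovL := lintegral_image_eq_lintegral_abs_det_fderiv_mul volume hSL hderL
    injOn_gL (A.indicator fDen)
  rw [image_gL] at hcovL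
  have hptL : ∫⁻ x in Ioo (0:ℝ) (1/2) ×ˢ Ioo (0:ℝ) 1,
      ENNReal.ofReal |(DLm x).det| * A.indicator fDen (gLf x) ∂volume
      = ∫⁻ x in Ioo (0:ℝ) (1/2) ×ˢ Ioo (0:ℝ) 1, (gLf ⁻¹' A).indicator fDen x ∂volume := by
    refine setLIntegral_congr_fun hSL ?_
    rintro ⟨x, y⟩ ⟨⟨hx0, hx1⟩, hy0, hy1⟩
    simp only at hx0 hx1 hy0 hy1
    have h1x : (0:ℝ) < 1 - x := by linarith
    have h1y : (0:ℝ) < 1 + y := by linarith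
    have hdet : (DLm (x, y)).det = 1 / (1 - x)^2 * (1 / (1 + y)^2) := D2_det _ _
    beta_reduce
    by_cases hmem : gLf (x, y) ∈ A
    · rw [indicator_of_mem hmem, indicator_of_mem (mem_preimage.2 hmem)]
      rw [hdet, abs_of_pos (by positivity)]
      exact keyL x y hx0 hx1 hy0 hy1
    · rw [indicator_of_notMem hmem, mul_zero,
        indicator_of_notMem (show (x, y) ∉ gLf ⁻¹' A from hmem)]
  -- change of variables on the right half
  have hderR : ∀ p ∈ Ioo (1/2:ℝ) 1 ×ˢ Ioo (0:ℝ) 1,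
      HasFDerivWithinAt gRf (DRm p) (Ioo (1/2:ℝ) 1 ×ˢ Ioo (0:ℝ) 1) p := by
    rintro ⟨x, y⟩ ⟨⟨hx0, hx1⟩, hy0, hy1⟩
    exact (hasFDerivAt_gR (x, y) (by simp only; intro h; rw [h] at hx0; linarith)
      (by simp only; intro h; linarith)).hasFDerivWithinAt
  have hcovR := lintegral_image_eq_lintegral_abs_det_fderiv_mul volume hSR hderR
    injOn_gR (A.indicator fDen)
  rw [image_gR] at hcovR
  have hptR : ∫⁻ x in Ioo (1/2:ℝ) 1 ×ˢ Ioo (0:ℝ) 1,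
      ENNReal.ofReal |(DRm x).det| * A.indicator fDen (gRf x) ∂volume
      = ∫⁻ x in Ioo (1/2:ℝ) 1 ×ˢ Ioo (0:ℝ) 1, (gRf ⁻¹' A).indicator fDen x ∂volume := by
    refine setLIntegral_congr_fun hSR ?_
    rintro ⟨x, y⟩ ⟨⟨hx0, hx1⟩, hy0, hy1⟩
    simp only at hx0 hx1 hy0 hy1
    have hx : (0:ℝ) < x := by linarith
    have h1y : (0:ℝ) < 1 + y := by linarith
    have hdet : (DRm (x, y)).det = -(1 / x^2) * -(1 / (1 + y)^2) := D2_det _ _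
    beta_reduce
    by_cases hmem : gRf (x, y) ∈ A
    · rw [indicator_of_mem hmem, indicator_of_mem (mem_preimage.2 hmem)]
      rw [hdet, show -(1 / x^2) * -(1 / (1 + y)^2) = 1 / x^2 * (1 / (1 + y)^2) by ring,
        abs_of_pos (by positivity)]
      exact keyR x y hx0 hx1 hy0 hy1
    · rw [indicator_of_notMem hmem, mul_zero,
        indicator_of_notMem (show (x, y) ∉ gRf ⁻¹' A from hmem)]
  -- rewrite indicator integrals as set integrals
  have hindL : ∫⁻ x in Ioo (0:ℝ) (1/2) ×ˢ Ioo (0:ℝ) 1, (gLf ⁻¹' A).indicator fDen x ∂volume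
      = ∫⁻ x in gLf ⁻¹' A ∩ (Ioo (0:ℝ) (1/2) ×ˢ Ioo (0:ℝ) 1), fDen x ∂volume := by
    rw [lintegral_indicator (measurable_gL hA), Measure.restrict_restrict (measurable_gL hA)]
  have hindR : ∫⁻ x in Ioo (1/2:ℝ) 1 ×ˢ Ioo (0:ℝ) 1, (gRf ⁻¹' A).indicator fDen x ∂volume
      = ∫⁻ x in gRf ⁻¹' A ∩ (Ioo (1/2:ℝ) 1 ×ˢ Ioo (0:ℝ) 1), fDen x ∂volume := by
    rw [lintegral_indicator (measurable_gR hA), Measure.restrict_restrict (measurable_gR hA)]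
  have hindTL : ∫⁻ x in Ioo (0:ℝ) 1 ×ˢ Ioo (0:ℝ) (1/2), A.indicator fDen x ∂volume
      = ∫⁻ x in A ∩ (Ioo (0:ℝ) 1 ×ˢ Ioo (0:ℝ) (1/2)), fDen x ∂volume := by
    rw [lintegral_indicator hA, Measure.restrict_restrict hA]
  have hindTR : ∫⁻ x in Ioo (0:ℝ) 1 ×ˢ Ioo (1/2:ℝ) 1, A.indicator fDen x ∂volume
      = ∫⁻ x in A ∩ (Ioo (0:ℝ) 1 ×ˢ Ioo (1/2:ℝ) 1), fDen x ∂volume := by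
    rw [lintegral_indicator hA, Measure.restrict_restrict hA]
  rw [← hindL, ← hptL, ← hcovL, hindTL, ← hindR, ← hptR, ← hcovR, hindTR]
  -- recombine the two targets
  have hdisjT : Disjoint (A ∩ (Ioo (0:ℝ) 1 ×ˢ Ioo (0:ℝ) (1/2)))
      (A ∩ (Ioo (0:ℝ) 1 ×ˢ Ioo (1/2:ℝ) 1)) := by
    refine Disjoint.mono inter_subset_right inter_subset_right ?_
    rw [Set.disjoint_left]
    rintro ⟨x, y⟩ ⟨_, ⟨_, h1⟩⟩ ⟨_, ⟨h2, _⟩⟩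
    simp only at h1 h2
    linarith
  rw [← lintegral_union (hA.inter hTR) hdisjT, ← Set.inter_union_distrib_left]
  refine setLIntegral_congr (ae_eq_set.2 ⟨?_, ?_⟩)
  · rw [Set.diff_eq_empty.2]
    · exact measure_empty
    · rintro ⟨x, y⟩ ⟨hAm, hu⟩
      rcases hu with ⟨⟨hx0, hx1⟩, hy0, hy1⟩ | ⟨⟨hx0, hx1⟩, hy0, hy1⟩ <;>
        exact ⟨hAm, ⟨hx0, hx1⟩, by constructor <;> linarith⟩
  · apply measure_mono_null _ hl2
    rintro ⟨x, y⟩ ⟨⟨hAm, ⟨hx0, hx1⟩, hy0, hy1⟩, hnot⟩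
    show y = 1/2
    by_contra hne
    rcases lt_trichotomy y (1/2) with h | h | h
    · exact hnot ⟨hAm, Or.inl ⟨⟨hx0, hx1⟩, hy0, h⟩⟩
    · exact hne h
    · exact hnot ⟨hAm, Or.inr ⟨⟨hx0, hx1⟩, h, hy1⟩⟩
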